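/- Let k be a positive integer and let G be a finite simple graph on n(G) ≥ 2 vertices with maximum degree Δ(G) ≥ k and minimum degree δ(G) ≥ 1. Then F_k(G) ≤ (Δ(G) − k + 1)·n(G) / (Δ(G) − k + 1 + min{δ(G), k}). -/

import Mathlib

/-- One step of the `k`-forcing color change process: a colored vertex (in `S`)
with at most `k` non-colored neighbors causes all of its neighbors to become colored. -/
def kStep {V : Type*} [Fintype V] [DecidableEq V] (G : SimpleGraph V) [DecidableRel G.Adj]
    (k : ℕ) (S : Finset V) : Finset V :=
  S ∪ Finset.univ.filter (fun v => ∃ u ∈ S, G.Adj u v ∧ (G.neighborFinset u \ S).card ≤ k)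

/-- `S` is a `k`-forcing set if iterating the color change rule starting from `S`
eventually colors all vertices of `G`. -/
def IsKForcingSet {V : Type*} [Fintype V] [DecidableEq V] (G : SimpleGraph V)
    [DecidableRel G.Adj] (k : ℕ) (S : Finset V) : Prop :=
  ∃ n : ℕ, (kStep G k)^[n] S = Finset.univ

/-- The `k`-forcing number `F_k(G)`: the minimum cardinality of a `k`-forcing set. -/
noncomputable def kForcingNumber {V : Type*} [Fintype V] [DecidableEq V] (G : SimpleGraph V)
    [DecidableRel G.Adj] (k : ℕ) : ℕ :=
  sInf {m | ∃ S : Finset V, S.card = m ∧ IsKForcingSet G k S}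

section Aux

variable {V : Type*} [Fintype V] [DecidableEq V] (G : SimpleGraph V) [DecidableRel G.Adj] (k : ℕ)

lemma subset_kStep (S : Finset V) : S ⊆ kStep G k S := Finset.subset_union_left

lemma kStep_mono {S S' : Finset V} (h : S ⊆ S') : kStep G k S ⊆ kStep G k S' := by
  intro x hx
  simp only [kStep, Finset.mem_union, Finset.mem_filter, Finset.mem_univ, true_and] at hx ⊢
  rcases hx with hx | ⟨u, hu, hadj, hcard⟩
  · exact Or.inl (h hx)
  · refine Or.inr ⟨u, h hu, hadj, le_trans (Finset.card_le_card ?_) hcard⟩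
    exact Finset.sdiff_subset_sdiff (le_refl _) h

lemma kStep_iter_mono {S S' : Finset V} (h : S ⊆ S') (n : ℕ) :
    (kStep G k)^[n] S ⊆ (kStep G k)^[n] S' := by
  induction n generalizing S S' with
  | zero => exact h
  | succ n ih =>
      rw [Function.iterate_succ_apply, Function.iterate_succ_apply]
      exact ih (kStep_mono G k h)

lemma kForcing_main_aux (hk : 1 ≤ k) (hΔ : k ≤ G.maxDegree) (hδ : 1 ≤ G.minDegree) :
    ∀ N : ℕ, ∀ C : Finset V, (Finset.univ \ C).card ≤ N →
      ∃ T : Finset V, (∃ j, (kStep G k)^[j] (C ∪ T) = Finset.univ) ∧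
        (G.maxDegree - k + 1 + min G.minDegree k) * T.card ≤
          (G.maxDegree - k + 1) * (Finset.univ \ C).card := by
  intro N
  induction N with
  | zero =>
      intro C hC
      have hCu : C = Finset.univ := by
        have h0 : (Finset.univ \ C) = ∅ := Finset.card_eq_zero.mp (Nat.le_zero.mp hC)
        have := Finset.sdiff_eq_empty_iff_subset.mp h0
        exact Finset.eq_univ_iff_forall.mpr fun x => this (Finset.mem_univ x)
      exact ⟨∅, ⟨0, by simp [hCu]⟩, by simp⟩
  | succ N ih =>
      intro C hC
      by_cases hCuniv : C = Finset.univ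
      · exact ⟨∅, ⟨0, by simp [hCuniv]⟩, by simp⟩
      by_cases hstuck : kStep G k C = C
      · -- stuck case: find a vertex `w` with many uncolored neighbors
        have hw : ∃ w : V, min G.minDegree k ≤ (G.neighborFinset w \ C).card := by
          by_cases hA : ∃ w ∈ C, (G.neighborFinset w \ C).Nonempty
          · obtain ⟨w, hwC, v, hv⟩ := hA
            refine ⟨w, ?_⟩
            by_contra hlt
            push_neg at hlt
            have hvk : v ∈ kStep G k C := by
              simp only [kStep, Finset.mem_union, Finset.mem_filter, Finset.mem_univ, true_and]
              refine Or.inr ⟨w, hwC, ?_, ?_⟩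
              · exact (SimpleGraph.mem_neighborFinset G w v).mp (Finset.mem_sdiff.mp hv).1
              · have : min G.minDegree k ≤ k := min_le_right _ _
                omega
            rw [hstuck] at hvk
            exact (Finset.mem_sdiff.mp hv).2 hvk
          · push_neg at hA
            obtain ⟨v, hv⟩ : ∃ v, v ∉ C := by
              by_contra h
              push_neg at h
              exact hCuniv (Finset.eq_univ_iff_forall.mpr h)
            refine ⟨v, ?_⟩
            have heq : G.neighborFinset v \ C = G.neighborFinset v := by
              apply Finset.sdiff_eq_self_of_disjoint
              rw [Finset.disjoint_right]
              intro x hxC hxN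
              have : v ∈ G.neighborFinset x \ C := by
                rw [Finset.mem_sdiff, SimpleGraph.mem_neighborFinset]
                exact ⟨((SimpleGraph.mem_neighborFinset G v x).mp hxN).symm, hv⟩
              exact Finset.nonempty_iff_ne_empty.mp ⟨v, this⟩ (hA x hxC)
            rw [heq]
            calc min G.minDegree k ≤ G.minDegree := min_le_left _ _
              _ ≤ G.degree v := G.minDegree_le_degree v
              _ = (G.neighborFinset v).card := rfl
        obtain ⟨w, hwu⟩ := hw
        set Nw : Finset V := G.neighborFinset w \ C with hNwdef
        set u : ℕ := Nw.card with hudef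
        have hudeg : u ≤ G.maxDegree := by
          calc u ≤ (G.neighborFinset w).card := Finset.card_le_card Finset.sdiff_subset
            _ = G.degree w := rfl
            _ ≤ G.maxDegree := G.degree_le_maxDegree w
        obtain ⟨P', hP'sub, hP'card⟩ :=
          Finset.exists_subset_card_eq (show u - min u k ≤ Nw.card by omega)
        set P : Finset V := ({w} \ C) ∪ P' with hPdef
        set Free : Finset V := Nw \ P' with hFreedef
        have hFreecard : Free.card = min u k := by
          rw [hFreedef, Finset.card_sdiff_of_subset hP'sub, hP'card]; omega
        have hm1 : 1 ≤ min G.minDegree k := le_min hδ hk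
        have hmk : min G.minDegree k ≤ k := min_le_right _ _
        have hFm : min G.minDegree k ≤ Free.card := by rw [hFreecard]; omega
        have hPcard : P.card ≤ G.maxDegree - k + 1 := by
          calc P.card ≤ ({w} \ C).card + P'.card := Finset.card_union_le _ _
            _ ≤ 1 + (u - min u k) := by
                have h1 : ({w} \ C).card ≤ ({w} : Finset V).card :=
                  Finset.card_le_card Finset.sdiff_subset
                simp only [Finset.card_singleton] at h1
                omega
            _ ≤ G.maxDegree - k + 1 := by omega
        -- disjointness facts
        have hdisjPC : Disjoint C P := by
          rw [hPdef, Finset.disjoint_union_right]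
          constructor
          · rw [Finset.disjoint_right]; intro x hx; exact (Finset.mem_sdiff.mp hx).2
          · rw [Finset.disjoint_right]; intro x hx
            exact (Finset.mem_sdiff.mp (hP'sub hx)).2
        have hFreeNw : Free ⊆ Nw := Finset.sdiff_subset
        have hdisjFree : Disjoint (C ∪ P) Free := by
          rw [Finset.disjoint_union_left]
          constructor
          · rw [Finset.disjoint_right]; intro x hx
            exact (Finset.mem_sdiff.mp (hFreeNw hx)).2
          · rw [hPdef, Finset.disjoint_union_left]
            constructor
            · rw [Finset.disjoint_right]; intro x hx
              have hxN : x ∈ G.neighborFinset w := (Finset.mem_sdiff.mp (hFreeNw hx)).1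
              intro hxw
              have : x = w := Finset.mem_singleton.mp (Finset.mem_sdiff.mp hxw).1
              rw [this] at hxN
              exact (G.irrefl ((SimpleGraph.mem_neighborFinset G w w).mp hxN))
            · rw [Finset.disjoint_right]; intro x hx
              exact (Finset.mem_sdiff.mp hx).2
        -- Free gets forced
        have hforce : Free ⊆ kStep G k (C ∪ P) := by
          intro x hx
          simp only [kStep, Finset.mem_union, Finset.mem_filter, Finset.mem_univ, true_and]
          refine Or.inr ⟨w, ?_, ?_, ?_⟩
          · by_cases hwC : w ∈ C
            · exact Or.inl hwC
            · refine Or.inr ?_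
              rw [hPdef, Finset.mem_union]
              exact Or.inl (Finset.mem_sdiff.mpr ⟨Finset.mem_singleton_self w, hwC⟩)
          · exact (SimpleGraph.mem_neighborFinset G w x).mp (Finset.mem_sdiff.mp (hFreeNw hx)).1
          · have hsub : G.neighborFinset w \ (C ∪ P) ⊆ Free := by
              intro y hy
              rw [Finset.mem_sdiff, Finset.mem_union] at hy
              push_neg at hy
              rw [hFreedef, Finset.mem_sdiff, hNwdef, Finset.mem_sdiff]
              refine ⟨⟨hy.1, hy.2.1⟩, fun hyP' => hy.2.2 (by
                rw [hPdef]; exact Finset.mem_union_right _ hyP')⟩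
            calc (G.neighborFinset w \ (C ∪ P)).card ≤ Free.card := Finset.card_le_card hsub
              _ = min u k := hFreecard
              _ ≤ k := min_le_right _ _
        -- recurse on C'' = C ∪ P ∪ Free
        set C'' : Finset V := (C ∪ P) ∪ Free with hC''def
        have hFreene : Free.Nonempty := by
          rw [← Finset.card_pos, hFreecard]; omega
        obtain ⟨x0, hx0⟩ := hFreene
        have hx0C : x0 ∉ C := (Finset.mem_sdiff.mp (hFreeNw hx0)).2
        have hCsubC'' : C ⊆ C'' := by
          intro y hy; exact Finset.mem_union_left _ (Finset.mem_union_left _ hy)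
        have hss : Finset.univ \ C'' ⊂ Finset.univ \ C := by
          constructor
          · exact Finset.sdiff_subset_sdiff (le_refl _) hCsubC''
          · intro hcon
            have hx0mem : x0 ∈ Finset.univ \ C := Finset.mem_sdiff.mpr ⟨Finset.mem_univ _, hx0C⟩
            have := hcon hx0mem
            rw [Finset.mem_sdiff] at this
            exact this.2 (Finset.mem_union_right _ hx0)
        have hmeas : (Finset.univ \ C'').card ≤ N := by
          have := Finset.card_lt_card hss
          omega
        obtain ⟨T', ⟨j, hj⟩, hcnt⟩ := ih C'' hmeas
        refine ⟨P ∪ T', ⟨j + 1, ?_⟩, ?_⟩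
        · -- forcing
          have hsub2 : C'' ∪ T' ⊆ kStep G k (C ∪ (P ∪ T')) := by
            apply Finset.union_subset
            · apply Finset.union_subset
              · refine Finset.Subset.trans ?_ (subset_kStep G k _)
                intro y hy
                rcases Finset.mem_union.mp hy with h | h
                · exact Finset.mem_union_left _ h
                · exact Finset.mem_union_right _ (Finset.mem_union_left _ h)
              · refine Finset.Subset.trans hforce (kStep_mono G k ?_)
                intro y hy
                rcases Finset.mem_union.mp hy with h | h
                · exact Finset.mem_union_left _ h
                · exact Finset.mem_union_right _ (Finset.mem_union_left _ h)
            · refine Finset.Subset.trans ?_ (subset_kStep G k _)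
              intro y hy
              exact Finset.mem_union_right _ (Finset.mem_union_right _ hy)
          refine Finset.univ_subset_iff.mp ?_
          calc Finset.univ = (kStep G k)^[j] (C'' ∪ T') := hj.symm
            _ ⊆ (kStep G k)^[j] (kStep G k (C ∪ (P ∪ T'))) := kStep_iter_mono G k hsub2 j
            _ = (kStep G k)^[j+1] (C ∪ (P ∪ T')) := (Function.iterate_succ_apply _ _ _).symm
        · -- counting
          have hc1 : (C ∪ P).card = C.card + P.card := Finset.card_union_of_disjoint hdisjPC
          have hc2 : C''.card = (C ∪ P).card + Free.card :=
            Finset.card_union_of_disjoint hdisjFree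
          have hsd1 : (Finset.univ \ C).card = Fintype.card V - C.card := by
            rw [Finset.card_sdiff_of_subset (Finset.subset_univ _), Finset.card_univ]
          have hsd2 : (Finset.univ \ C'').card = Fintype.card V - C''.card := by
            rw [Finset.card_sdiff_of_subset (Finset.subset_univ _), Finset.card_univ]
          have hle1 : C''.card ≤ Fintype.card V := by
            rw [← Finset.card_univ]; exact Finset.card_le_card (Finset.subset_univ _)
          have hle2 : C.card ≤ Fintype.card V := by
            rw [← Finset.card_univ]; exact Finset.card_le_card (Finset.subset_univ _)
          set a : ℕ := G.maxDegree - k + 1 with hadef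
          set m : ℕ := min G.minDegree k with hmdef
          have hmix : m * P.card ≤ a * Free.card := by
            calc m * P.card ≤ m * a := Nat.mul_le_mul_left m hPcard
              _ = a * m := Nat.mul_comm m a
              _ ≤ a * Free.card := Nat.mul_le_mul_left a hFm
          calc (a + m) * (P ∪ T').card
              ≤ (a + m) * (P.card + T'.card) :=
                Nat.mul_le_mul_left _ (Finset.card_union_le _ _)
            _ = (a + m) * P.card + (a + m) * T'.card := by ring
            _ = (a * P.card + m * P.card) + (a + m) * T'.card := by ring
            _ ≤ (a * P.card + a * Free.card) + a * (Finset.univ \ C'').card := by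
                exact Nat.add_le_add (Nat.add_le_add_left hmix _) hcnt
            _ = a * (P.card + Free.card + (Finset.univ \ C'').card) := by ring
            _ = a * (Finset.univ \ C).card := by
                congr 1
                omega
      · -- not stuck: free progress
        have hsubs : C ⊆ kStep G k C := subset_kStep G k C
        have hsslt : C ⊂ kStep G k C := ssubset_of_subset_of_ne hsubs (Ne.symm hstuck)
        have hcardlt : C.card < (kStep G k C).card := Finset.card_lt_card hsslt
        have hsd1 : (Finset.univ \ C).card = Fintype.card V - C.card := by
          rw [Finset.card_sdiff_of_subset (Finset.subset_univ _), Finset.card_univ]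
        have hsd2 : (Finset.univ \ kStep G k C).card = Fintype.card V - (kStep G k C).card := by
          rw [Finset.card_sdiff_of_subset (Finset.subset_univ _), Finset.card_univ]
        have hle1 : (kStep G k C).card ≤ Fintype.card V := by
          rw [← Finset.card_univ]; exact Finset.card_le_card (Finset.subset_univ _)
        have hmeas : (Finset.univ \ kStep G k C).card ≤ N := by omega
        obtain ⟨T', ⟨j, hj⟩, hcnt⟩ := ih (kStep G k C) hmeas
        refine ⟨T', ⟨j + 1, ?_⟩, ?_⟩
        · have hsub2 : kStep G k C ∪ T' ⊆ kStep G k (C ∪ T') := by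
            apply Finset.union_subset
            · exact kStep_mono G k Finset.subset_union_left
            · exact Finset.Subset.trans Finset.subset_union_right (subset_kStep G k _)
          refine Finset.univ_subset_iff.mp ?_
          calc Finset.univ = (kStep G k)^[j] (kStep G k C ∪ T') := hj.symm
            _ ⊆ (kStep G k)^[j] (kStep G k (C ∪ T')) := kStep_iter_mono G k hsub2 j
            _ = (kStep G k)^[j+1] (C ∪ T') := (Function.iterate_succ_apply _ _ _).symm
        · refine le_trans hcnt (Nat.mul_le_mul_left _ (Finset.card_le_card ?_))
          exact Finset.sdiff_subset_sdiff (le_refl _) hsubs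

end Aux

/-- If `G` has `n(G) ≥ 2` vertices, `Δ(G) ≥ k` and `δ(G) ≥ 1`, then
`F_k(G) ≤ (Δ-k+1)n / (Δ-k+1+min {δ,k})`. -/
theorem kForcingNumber_le_ACDP {V : Type*} [Fintype V] [DecidableEq V]
    (G : SimpleGraph V) [DecidableRel G.Adj] (k : ℕ) (hk : 1 ≤ k)
    (hn : 2 ≤ Fintype.card V) (hΔ : k ≤ G.maxDegree) (hδ : 1 ≤ G.minDegree) :
    (kForcingNumber G k : ℝ) ≤
      ((G.maxDegree : ℝ) - k + 1) * (Fintype.card V) /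
        ((G.maxDegree : ℝ) - k + 1 + min (G.minDegree : ℝ) (k : ℝ)) := by
  obtain ⟨T, ⟨j, hj⟩, hcnt⟩ :=
    kForcing_main_aux G k hk hΔ hδ ((Finset.univ \ (∅ : Finset V)).card) ∅ le_rfl
  have hT : IsKForcingSet G k T := ⟨j, by simpa using hj⟩
  have hF : kForcingNumber G k ≤ T.card := Nat.sInf_le ⟨T, rfl, hT⟩
  rw [Finset.sdiff_empty, Finset.card_univ] at hcnt
  -- pass to the reals
  set a : ℕ := G.maxDegree - k + 1 with hadef
  set m : ℕ := min G.minDegree k with hmdef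
  have hacast : (a : ℝ) = (G.maxDegree : ℝ) - k + 1 := by
    rw [hadef]; push_cast [Nat.cast_sub hΔ]; ring
  have hmcast : (m : ℝ) = min (G.minDegree : ℝ) (k : ℝ) := by
    rw [hmdef, Nat.cast_min]
  have hapos : (1 : ℝ) ≤ (a : ℝ) := by
    have : 1 ≤ a := by omega
    exact_mod_cast this
  have hmpos : (1 : ℝ) ≤ (m : ℝ) := by
    have : 1 ≤ m := le_min hδ hk
    exact_mod_cast this
  have hdenpos : (0 : ℝ) < (G.maxDegree : ℝ) - k + 1 + min (G.minDegree : ℝ) (k : ℝ) := by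
    rw [← hacast, ← hmcast]; linarith
  rw [le_div_iff₀ hdenpos]
  have hcntR : ((a : ℝ) + m) * (T.card : ℝ) ≤ (a : ℝ) * (Fintype.card V : ℝ) := by
    exact_mod_cast hcnt
  have hFR : (kForcingNumber G k : ℝ) ≤ (T.card : ℝ) := by exact_mod_cast hF
  calc (kForcingNumber G k : ℝ) *
        ((G.maxDegree : ℝ) - k + 1 + min (G.minDegree : ℝ) (k : ℝ))
      = (kForcingNumber G k : ℝ) * ((a : ℝ) + (m : ℝ)) := by rw [hacast, hmcast]
    _ ≤ (T.card : ℝ) * ((a : ℝ) + (m : ℝ)) := by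
        apply mul_le_mul_of_nonneg_right hFR; linarith
    _ = ((a : ℝ) + m) * (T.card : ℝ) := by ring
    _ ≤ (a : ℝ) * (Fintype.card V : ℝ) := hcntR
    _ = ((G.maxDegree : ℝ) - k + 1) * (Fintype.card V) := by rw [hacast]
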